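/- The generating function ν(q) = Σ_{d,N} ν(d,N)q^N for Minc's partition function, where ν(d,N) counts compositions of N with first part d in which each part is at most twice the preceding part, satisfies ν(q) = 1/(1 + Σ_{i≥1} (−1)^i q^{2^{i+1} − i − 2} / ((1−q)(1−q³)(1−q⁷)···(1−q^{2^i − 1}))). -/

import Mathlib

noncomputable section
open PowerSeries

/-- The number of compositions of `N` (sequences of positive integers summing
to `N`, including the empty composition of `0`) in which each part is at most
twice the preceding part; `ν(q) = Σ_N nuCoeff N · q^N` is Minc's generating
function `Σ_{d,N} ν(d,N) q^N`. -/
def nuCoeff (N : ℕ) : ℕ :=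
  Nat.card {l : List ℕ // l.sum = N ∧ (∀ x ∈ l, 0 < x) ∧
    l.Chain' (fun a b => b ≤ 2 * a)}

/-- The series `1 + Σ_{i≥1} (−1)^i q^{2^{i+1}−i−2} / ((1−q)(1−q³)(1−q⁷)⋯(1−q^{2^i−1}))`.
Since the `i`-th term has order `2^{i+1}−i−2 ≥ i`, its coefficient of `q^N`
only receives contributions from terms with `i ≤ N`, so the infinite sum can
be defined coefficientwise by a finite sum.  The factor `1/(1−q^{2^j−1})`
is the inverse `invOfUnit (1 − q^{2^j−1}) 1` in `ℤ[[q]]`. -/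
def nuDenom : PowerSeries ℤ :=
  PowerSeries.mk fun N =>
    ∑ i ∈ Finset.range (N + 1),
      (PowerSeries.coeff (R := ℤ) N)
        ((-1 : ℤ) ^ i • ((X : PowerSeries ℤ) ^ (2 ^ (i + 1) - i - 2) *
          ∏ j ∈ Finset.Icc 1 i,
            PowerSeries.invOfUnit (1 - (X : PowerSeries ℤ) ^ (2 ^ j - 1)) 1))

namespace MincAux
open Finset List

/-- validity of a reversed composition: positive parts, each part ≤ twice the next. -/
def ok (l : List ℕ) : Prop := (∀ x ∈ l, 0 < x) ∧ l.Chain' (fun a b => a ≤ 2 * b)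

instance : DecidablePred ok := fun l => by unfold ok; exact Classical.dec _

/-- weight at level k -/
def wt (k : ℕ) (l : List ℕ) : ℕ := l.sum + (2 ^ (k+1) - 2) * l.headI

/-- all positive lists with sum ≤ M -/
def allC (M : ℕ) : Finset (List ℕ) :=
  (Finset.range (M+1)).biUnion fun n =>
    Finset.image (fun c : Composition n => c.blocks.reverse) Finset.univ

lemma mem_allC {M : ℕ} {l : List ℕ} :
    l ∈ allC M ↔ l.sum ≤ M ∧ ∀ x ∈ l, 0 < x := by
  constructor
  · intro h
    simp only [allC, Finset.mem_biUnion, Finset.mem_image, Finset.mem_range] at h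
    obtain ⟨n, hn, c, -, rfl⟩ := h
    refine ⟨?_, ?_⟩
    · rw [List.sum_reverse, c.blocks_sum]; omega
    · intro x hx; exact c.blocks_pos (List.mem_reverse.1 hx)
  · rintro ⟨hs, hp⟩
    simp only [allC, Finset.mem_biUnion, Finset.mem_image, Finset.mem_range]
    exact ⟨l.sum, by omega,
      ⟨l.reverse, fun hi => hp _ (List.mem_reverse.1 hi), by rw [List.sum_reverse]⟩,
      Finset.mem_univ _, by simp⟩

def SF (k M : ℕ) : Finset (List ℕ) :=
  (allC M).filter fun l => l ≠ [] ∧ ok l ∧ wt k l = M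

def AF (N : ℕ) : Finset (List ℕ) :=
  (allC N).filter fun l => ok l ∧ l.sum = N

lemma mem_SF {k M : ℕ} {l : List ℕ} :
    l ∈ SF k M ↔ l ≠ [] ∧ ok l ∧ wt k l = M := by
  simp only [SF, Finset.mem_filter, mem_allC]
  constructor
  · tauto
  · rintro ⟨h1, h2, h3⟩
    exact ⟨⟨by unfold wt at h3; omega, h2.1⟩, h1, h2, h3⟩

lemma mem_AF {N : ℕ} {l : List ℕ} :
    l ∈ AF N ↔ ok l ∧ l.sum = N := by
  simp only [AF, Finset.mem_filter, mem_allC]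
  constructor
  · tauto
  · rintro ⟨h1, h2⟩
    exact ⟨⟨le_of_eq h2, h1.1⟩, h1, h2⟩

def gc (k M : ℕ) : ℕ := (SF k M).card
def ac (N : ℕ) : ℕ := (AF N).card

lemma two_le_pow (k : ℕ) : 2 ≤ 2 ^ (k+1) := by
  calc 2 = 2^1 := rfl
  _ ≤ 2^(k+1) := Nat.pow_le_pow_right (by norm_num) (by omega)

lemma sum_ge_headI {l : List ℕ} (hl : l ≠ []) (hp : ∀ x ∈ l, 0 < x) :
    l.headI ≤ l.sum ∧ 0 < l.headI := by
  cases l with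
  | nil => simp at hl
  | cons a t =>
    simp only [List.headI, List.sum_cons]
    exact ⟨Nat.le_add_right _ _, hp a (by simp)⟩

lemma gc_eq_zero {k M : ℕ} (h : M < 2 ^ (k+1) - 1) : gc k M = 0 := by
  rw [gc, Finset.card_eq_zero, Finset.eq_empty_iff_forall_notMem]
  intro l hl
  rw [mem_SF] at hl
  obtain ⟨hne, hok, hwt⟩ := hl
  obtain ⟨hh, hh0⟩ := sum_ge_headI hne hok.1
  have h2 := two_le_pow k
  unfold wt at hwt
  have : (2 ^ (k+1) - 2) * 1 ≤ (2 ^ (k+1) - 2) * l.headI := Nat.mul_le_mul_left _ hh0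
  omega

lemma chain'_cons_iff {a : ℕ} {l : List ℕ} :
    List.Chain' (fun x y => x ≤ 2 * y) (a :: l) ↔
      (l = [] ∨ a ≤ 2 * l.headI) ∧ List.Chain' (fun x y => x ≤ 2 * y) l := by
  unfold List.Chain'
  rw [List.isChain_cons]
  cases l with
  | nil => simp
  | cons b t => simp [List.head?]

lemma wt_cons (k a : ℕ) (t : List ℕ) :
    wt k (a :: t) = (a + t.sum) + (2 ^ (k+1) - 2) * a := by
  simp [wt]

lemma pos_cons {a : ℕ} {t : List ℕ} (ha : 0 < a) (ht : ∀ x ∈ t, 0 < x) :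
    ∀ x ∈ a :: t, 0 < x := by
  intro x hx
  rcases List.mem_cons.1 hx with h | h
  · omega
  · exact ht x h

def incr (l : List ℕ) : Prop := l.tail = [] ∨ l.headI + 1 ≤ 2 * l.tail.headI
instance : DecidablePred incr := fun l => by unfold incr; infer_instance

lemma B1 (k M : ℕ) :
    ((SF k (M + (2^(k+1) - 1))).filter fun l => l.headI = 1).card = ac M := by
  have h2 := two_le_pow k
  apply Finset.card_nbij' (fun l => l.tail) (fun ρ => 1 :: ρ)
  · intro l hl
    simp only [Finset.mem_coe] at hl ⊢
    simp only [Finset.mem_filter, mem_SF] at hl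
    obtain ⟨⟨hne, ⟨hp, hc⟩, hwt⟩, hh⟩ := hl
    cases l with
    | nil => exact absurd rfl hne
    | cons a t =>
      simp only [List.headI_cons] at hh; subst hh
      rw [chain'_cons_iff] at hc
      rw [wt_cons] at hwt
      rw [List.tail_cons, mem_AF]
      refine ⟨⟨fun x hx => hp x (List.mem_cons_of_mem _ hx), hc.2⟩, by omega⟩
  · intro ρ hρ
    simp only [Finset.mem_coe] at hρ ⊢
    rw [mem_AF] at hρ
    obtain ⟨⟨hp, hc⟩, hs⟩ := hρ
    simp only [Finset.mem_filter, mem_SF]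
    refine ⟨⟨by simp, ⟨pos_cons one_pos hp, ?_⟩, ?_⟩, by simp⟩
    · rw [chain'_cons_iff]
      refine ⟨?_, hc⟩
      cases ρ with
      | nil => exact Or.inl rfl
      | cons b t => exact Or.inr (by have := hp b (by simp); simp only [List.headI_cons]; omega)
    · rw [wt_cons]; omega
  · intro l hl
    simp only [Finset.mem_coe] at hl
    simp only [Finset.mem_filter, mem_SF] at hl
    obtain ⟨⟨hne, _, _⟩, hh⟩ := hl
    cases l with
    | nil => exact absurd rfl hne
    | cons a t => simp only [List.headI_cons] at hh; subst hh; rfl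
  · intro ρ _; rfl

lemma B2 (k M : ℕ) :
    ((SF k (M + (2^(k+1) - 1))).filter fun l => 2 ≤ l.headI).card
      = ((SF k M).filter incr).card := by
  have h2 := two_le_pow k
  apply Finset.card_nbij' (fun l => (l.headI - 1) :: l.tail)
    (fun l => (l.headI + 1) :: l.tail)
  · intro l hl
    simp only [Finset.mem_coe] at hl ⊢
    simp only [Finset.mem_filter, mem_SF] at hl
    obtain ⟨⟨hne, ⟨hp, hc⟩, hwt⟩, hh⟩ := hl
    cases l with
    | nil => exact absurd rfl hne
    | cons a t =>
      simp only [List.headI_cons] at hh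
      obtain ⟨b, rfl⟩ : ∃ b, a = b + 2 := ⟨a - 2, by omega⟩
      rw [chain'_cons_iff] at hc
      rw [wt_cons] at hwt
      simp only [List.headI_cons, List.tail_cons, Finset.mem_filter, mem_SF]
      have hd : b + 2 - 1 = b + 1 := by omega
      rw [hd]
      have e1 : (2^(k+1)-2) * (b+2) = (2^(k+1)-2) * (b+1) + (2^(k+1)-2) := by ring
      refine ⟨⟨by simp, ⟨pos_cons (by omega) fun x hx => hp x (List.mem_cons_of_mem _ hx), ?_⟩,
        ?_⟩, ?_⟩
      · rw [chain'_cons_iff]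
        rcases hc.1 with h | h
        · exact ⟨Or.inl h, hc.2⟩
        · exact ⟨Or.inr (by omega), hc.2⟩
      · rw [wt_cons]; omega
      · unfold incr
        simp only [List.headI_cons, List.tail_cons]
        rcases hc.1 with h | h
        · exact Or.inl h
        · exact Or.inr (by omega)
  · intro l hl
    simp only [Finset.mem_coe] at hl ⊢
    simp only [Finset.mem_filter, mem_SF] at hl
    obtain ⟨⟨hne, ⟨hp, hc⟩, hwt⟩, hinc⟩ := hl
    cases l with
    | nil => exact absurd rfl hne
    | cons a t =>
      unfold incr at hinc
      simp only [List.headI_cons, List.tail_cons] at hinc ⊢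
      rw [chain'_cons_iff] at hc
      rw [wt_cons] at hwt
      have ha : 0 < a := hp a (by simp)
      have e1 : (2^(k+1)-2) * (a+1) = (2^(k+1)-2) * a + (2^(k+1)-2) := by ring
      simp only [Finset.mem_filter, mem_SF]
      refine ⟨⟨by simp, ⟨pos_cons (by omega) fun x hx => hp x (List.mem_cons_of_mem _ hx), ?_⟩,
        ?_⟩, by simp only [List.headI_cons]; omega⟩
      · rw [chain'_cons_iff]
        refine ⟨?_, hc.2⟩
        rcases hinc with h | h
        · exact Or.inl h
        · exact Or.inr h
      · rw [wt_cons]; omega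
  · intro l hl
    simp only [Finset.mem_coe] at hl
    simp only [Finset.mem_filter, mem_SF] at hl
    obtain ⟨⟨hne, _, _⟩, hh⟩ := hl
    cases l with
    | nil => exact absurd rfl hne
    | cons a t =>
      simp only [List.headI_cons, List.tail_cons] at hh ⊢
      congr 1
      omega
  · intro l hl
    simp only [Finset.mem_coe] at hl
    simp only [Finset.mem_filter, mem_SF] at hl
    obtain ⟨⟨hne, _, _⟩, _⟩ := hl
    cases l with
    | nil => exact absurd rfl hne
    | cons a t => simp

lemma B3 (k M : ℕ) :
    ((SF k M).filter fun l => ¬ incr l).card = gc (k+1) M := by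
  have h2 := two_le_pow k
  have h4 : 2 ^ (k+1+1) = 2 * 2 ^ (k+1) := by ring
  apply Finset.card_nbij' (fun l => l.tail) (fun μ => (2 * μ.headI) :: μ)
  · intro l hl
    simp only [Finset.mem_coe] at hl ⊢
    simp only [Finset.mem_filter, mem_SF] at hl
    obtain ⟨⟨hne, ⟨hp, hc⟩, hwt⟩, hinc⟩ := hl
    unfold incr at hinc
    push_neg at hinc
    obtain ⟨hte, hgt⟩ := hinc
    cases l with
    | nil => exact absurd rfl hne
    | cons a t =>
      simp only [List.tail_cons] at hte hgt ⊢
      rw [chain'_cons_iff] at hc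
      cases t with
      | nil => exact absurd rfl hte
      | cons c t' =>
        simp only [List.headI_cons] at hgt
        have haeq : a = 2 * c := by
          rcases hc.1 with h | h
          · exact absurd h hte
          · simp only [List.headI_cons] at h; omega
        subst haeq
        rw [mem_SF]
        refine ⟨hte, ⟨fun x hx => hp x (List.mem_cons_of_mem _ hx), hc.2⟩, ?_⟩
        rw [wt_cons] at hwt
        rw [wt_cons]
        have hc0 : 0 < c := hp c (by simp)
        have e1 : (2^(k+1)-2) * (2*c) = 2 * ((2^(k+1)-2) * c) := by ring
        have e2 : (2^(k+1+1)-2) * c = 2 * ((2^(k+1)-2) * c) + 2 * c := by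
          have : 2^(k+1+1) - 2 = 2 * (2^(k+1)-2) + 2 := by omega
          rw [this]; ring
        simp only [List.sum_cons] at hwt ⊢
        omega
  · intro μ hμ
    simp only [Finset.mem_coe] at hμ ⊢
    rw [mem_SF] at hμ
    obtain ⟨hne, ⟨hp, hc⟩, hwt⟩ := hμ
    cases μ with
    | nil => exact absurd rfl hne
    | cons c t' =>
      simp only [List.headI_cons]
      have hc0 : 0 < c := hp c (by simp)
      simp only [Finset.mem_filter, mem_SF]
      refine ⟨⟨by simp, ⟨pos_cons (by omega) hp, ?_⟩, ?_⟩, ?_⟩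
      · rw [chain'_cons_iff]
        exact ⟨Or.inr (by simp), hc⟩
      · rw [wt_cons] at hwt ⊢
        have e1 : (2^(k+1)-2) * (2*c) = 2 * ((2^(k+1)-2) * c) := by ring
        have e2 : (2^(k+1+1)-2) * c = 2 * ((2^(k+1)-2) * c) + 2 * c := by
          have : 2^(k+1+1) - 2 = 2 * (2^(k+1)-2) + 2 := by omega
          rw [this]; ring
        simp only [List.sum_cons] at hwt ⊢
        omega
      · unfold incr
        push_neg
        simp only [List.tail_cons, List.headI_cons]
        exact ⟨by simp, by omega⟩
  · intro l hl
    simp only [Finset.mem_coe] at hl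
    simp only [Finset.mem_filter, mem_SF] at hl
    obtain ⟨⟨hne, ⟨hp, hc⟩, _⟩, hinc⟩ := hl
    unfold incr at hinc
    push_neg at hinc
    cases l with
    | nil => exact absurd rfl hne
    | cons a t =>
      simp only [List.tail_cons] at hinc ⊢
      rw [chain'_cons_iff] at hc
      cases t with
      | nil => exact absurd rfl hinc.1
      | cons c t' =>
        simp only [List.headI_cons] at hinc ⊢
        congr 1
        rcases hc.1 with h | h
        · simp at h
        · simp only [List.headI_cons] at h; omega
  · intro μ _; rfl

lemma key (k M : ℕ) :
    gc k (M + (2^(k+1) - 1)) + gc (k+1) M = ac M + gc k M := by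
  have hsplit1 : ((SF k (M + (2^(k+1)-1))).filter fun l => l.headI = 1).card
      + ((SF k (M + (2^(k+1)-1))).filter fun l => ¬ l.headI = 1).card
      = gc k (M + (2^(k+1)-1)) :=
    Finset.card_filter_add_card_filter_not _
  have hsplit2 : ((SF k M).filter incr).card + ((SF k M).filter fun l => ¬ incr l).card
      = gc k M := Finset.card_filter_add_card_filter_not _
  have hne : ((SF k (M + (2^(k+1)-1))).filter fun l => ¬ l.headI = 1)
      = ((SF k (M + (2^(k+1)-1))).filter fun l => 2 ≤ l.headI) := by
    apply Finset.filter_congr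
    intro l hl
    rw [mem_SF] at hl
    obtain ⟨hne, ⟨hp, _⟩, _⟩ := hl
    have : 0 < l.headI := by
      cases l with
      | nil => exact absurd rfl hne
      | cons b s => exact hp b (by simp)
    omega
  have b1 := B1 k M
  have b2 := B2 k M
  have b3 := B3 k M
  rw [hne] at hsplit1
  omega

lemma nuCoeff_eq (N : ℕ) : nuCoeff N = ac N := by
  rw [nuCoeff, ac, ← Nat.card_eq_finsetCard]
  apply Nat.card_congr
  refine ⟨fun l => ⟨l.1.reverse, ?_⟩, fun l => ⟨l.1.reverse, ?_⟩, ?_, ?_⟩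
  · obtain ⟨l, hs, hp, hc⟩ := l
    rw [mem_AF]
    exact ⟨⟨fun x hx => hp x (List.mem_reverse.1 hx),
      List.isChain_reverse.2 (hc.imp fun _ _ h => h)⟩,
      by rw [List.sum_reverse]; exact hs⟩
  · obtain ⟨l, hl⟩ := l
    rw [mem_AF] at hl
    obtain ⟨⟨hp, hc⟩, hs⟩ := hl
    exact ⟨by rw [List.sum_reverse]; exact hs,
      fun x hx => hp x (List.mem_reverse.1 hx),
      List.isChain_reverse.2 (hc.imp fun _ _ h => h)⟩
  · intro l
    apply Subtype.ext
    simp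
  · intro l
    apply Subtype.ext
    simp

lemma AF_zero : AF 0 = {[]} := by
  ext l
  rw [mem_AF, Finset.mem_singleton]
  constructor
  · rintro ⟨⟨hp, _⟩, hs⟩
    cases l with
    | nil => rfl
    | cons a t =>
      have := hp a (by simp)
      simp only [List.sum_cons] at hs
      omega
  · rintro rfl
    exact ⟨⟨by simp, List.isChain_nil⟩, rfl⟩

lemma SF_zero_eq_AF {N : ℕ} (h : N ≠ 0) : SF 0 N = AF N := by
  ext l
  rw [mem_AF, mem_SF]
  have hwt : wt 0 l = l.sum := by
    simp [wt]
  rw [hwt]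
  constructor
  · rintro ⟨_, h1, h2⟩; exact ⟨h1, h2⟩
  · rintro ⟨h1, h2⟩
    refine ⟨?_, h1, h2⟩
    rintro rfl
    simp at h2
    omega
  
lemma ac_eq (N : ℕ) : ac N = (if N = 0 then 1 else 0) + gc 0 N := by
  by_cases h : N = 0
  · subst h
    rw [if_pos rfl, ac, AF_zero, gc_eq_zero (by norm_num)]
    simp
  · rw [if_neg h, ac, gc, SF_zero_eq_AF h, zero_add]


def Aser : PowerSeries ℤ := PowerSeries.mk fun N => (ac N : ℤ)
def Gser (k : ℕ) : PowerSeries ℤ := PowerSeries.mk fun M => (gc k M : ℤ)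
def iota (j : ℕ) : PowerSeries ℤ :=
  PowerSeries.invOfUnit (1 - (X : PowerSeries ℤ) ^ (2 ^ j - 1)) 1

lemma iota_mul (j : ℕ) (hj : 1 ≤ j) :
    (1 - (X : PowerSeries ℤ) ^ (2 ^ j - 1)) * iota j = 1 := by
  apply PowerSeries.mul_invOfUnit
  have h1 : 1 ≤ 2 ^ j := Nat.one_le_two_pow
  have h2 : (1:ℕ) ≤ 2 ^ j - 1 := by
    have : 2 ≤ 2 ^ j := by calc 2 = 2^1 := rfl
                                _ ≤ 2^j := Nat.pow_le_pow_right (by norm_num) hj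
    omega
  simp only [map_sub, map_one, map_pow, constantCoeff_X]
  rw [zero_pow (by omega)]
  simp

lemma L0 : Aser = 1 + Gser 0 := by
  ext n
  simp only [Aser, Gser, coeff_mk, map_add, PowerSeries.coeff_one]
  rw [ac_eq n]
  push_cast
  split_ifs <;> ring

lemma L2 (k : ℕ) :
    Gser k + X ^ (2^(k+1) - 1) * Gser (k+1)
      = X ^ (2^(k+1) - 1) * Aser + X ^ (2^(k+1) - 1) * Gser k := by
  ext M
  simp only [map_add, PowerSeries.coeff_X_pow_mul', Gser, Aser, coeff_mk]
  split_ifs with h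
  · have hM : M = (M - (2^(k+1)-1)) + (2^(k+1)-1) := by omega
    have := key k (M - (2^(k+1)-1))
    rw [← hM] at this
    exact_mod_cast congrArg (fun n : ℕ => (n : ℤ)) this
  · rw [gc_eq_zero (by omega)]
    simp

lemma L3 (k : ℕ) :
    Gser k = X ^ (2^(k+1) - 1) * (iota (k+1) * (Aser - Gser (k+1))) := by
  have h2 := L2 k
  have hmain : (1 - X ^ (2^(k+1) - 1)) * Gser k
      = X ^ (2^(k+1) - 1) * (Aser - Gser (k+1)) := by
    linear_combination h2
  have hi : (1 - (X : PowerSeries ℤ) ^ (2^(k+1) - 1)) * iota (k+1) = 1 := by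
    have := iota_mul (k+1) (by omega)
    simpa using this
  calc Gser k = ((1 - X ^ (2^(k+1) - 1)) * iota (k+1)) * Gser k := by rw [hi, one_mul]
  _ = iota (k+1) * ((1 - X ^ (2^(k+1) - 1)) * Gser k) := by ring
  _ = iota (k+1) * (X ^ (2^(k+1) - 1) * (Aser - Gser (k+1))) := by rw [hmain]
  _ = X ^ (2^(k+1) - 1) * (iota (k+1) * (Aser - Gser (k+1))) := by ring

def rho (i : ℕ) : PowerSeries ℤ :=
  X ^ (2 ^ (i+1) - i - 2) * ∏ j ∈ Finset.Icc 1 i, iota j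

def trm (i : ℕ) : PowerSeries ℤ := (-1 : PowerSeries ℤ) ^ i * rho i

lemma rho_succ (i : ℕ) :
    rho (i+1) = rho i * (X ^ (2^(i+1) - 1) * iota (i+1)) := by
  have h1 : i + 1 < 2 ^ (i+1) := by
    have := Nat.lt_two_pow_self (n := i+1); omega
  have h4 : 2 ^ (i+1+1) = 2 * 2 ^ (i+1) := by ring
  have hexp : 2 ^ (i+1+1) - (i+1) - 2 = (2 ^ (i+1) - i - 2) + (2 ^ (i+1) - 1) := by omega
  rw [rho, rho, hexp, pow_add, Finset.prod_Icc_succ_top (by omega : 1 ≤ i + 1)]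
  ring

lemma main (k : ℕ) :
    Aser * (∑ i ∈ Finset.range (k+1), trm i)
      = 1 + (-1 : PowerSeries ℤ) ^ k * (rho (k+1) * (Aser - Gser (k+1))) := by
  induction k with
  | zero =>
    have h0 : trm 0 = 1 := by
      rw [trm, rho, Finset.Icc_eq_empty (by omega : ¬ (1:ℕ) ≤ 0)]
      norm_num
    have h1 : rho 1 = X * iota 1 := by
      rw [rho, Finset.Icc_self, Finset.prod_singleton]
      norm_num
    rw [Finset.sum_range_succ, Finset.sum_range_zero, zero_add, h0, mul_one, h1]
    have h3' : Gser 0 = X * (iota 1 * (Aser - Gser 1)) := by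
      have := L3 0
      rwa [show 2^(0+1)-1 = 1 from rfl, pow_one] at this
    linear_combination L0 + h3'
  | succ k ih =>
    rw [Finset.sum_range_succ, mul_add, ih, trm]
    have step1 : 1 + (-1 : PowerSeries ℤ)^k * (rho (k+1) * (Aser - Gser (k+1)))
        + Aser * ((-1)^(k+1) * rho (k+1))
        = 1 + (-1 : PowerSeries ℤ)^(k+1) * (rho (k+1) * Gser (k+1)) := by ring
    rw [step1, L3 (k+1), rho_succ (k+1)]
    ring


lemma smul_eq_negpow_mul (i : ℕ) (f : PowerSeries ℤ) :
    ((-1 : ℤ) ^ i) • f = (-1 : PowerSeries ℤ) ^ i * f := by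
  rw [zsmul_eq_mul]
  push_cast
  ring

lemma coeff_negpow_mul (n i : ℕ) (f : PowerSeries ℤ) :
    PowerSeries.coeff n ((-1 : PowerSeries ℤ) ^ i * f)
      = (-1 : ℤ) ^ i * PowerSeries.coeff n f := by
  rw [← smul_eq_negpow_mul, map_smul, smul_eq_mul]

lemma coeff_nuDenom (n : ℕ) :
    PowerSeries.coeff n nuDenom
      = ∑ i ∈ Finset.range (n + 1), PowerSeries.coeff n (trm i) := by
  rw [nuDenom, coeff_mk]
  apply Finset.sum_congr rfl
  intro i _
  rw [trm, ← smul_eq_negpow_mul]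
  rfl

lemma exp_ge (i : ℕ) : i ≤ 2 ^ (i+1) - i - 2 := by
  have h1 : i < 2 ^ i := Nat.lt_two_pow_self (n := i)
  have h2 : 2 ^ (i+1) = 2 * 2 ^ i := by ring
  omega

lemma coeff_trm_zero {n i : ℕ} (h : n < i) : PowerSeries.coeff n (trm i) = 0 := by
  rw [trm, coeff_negpow_mul, rho, PowerSeries.coeff_X_pow_mul',
    if_neg (by have := exp_ge i; omega)]
  ring

lemma coeff_nuDenom_eq {q N : ℕ} (h : q ≤ N) :
    PowerSeries.coeff q nuDenom
      = PowerSeries.coeff q (∑ i ∈ Finset.range (N + 1), trm i) := by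
  rw [map_sum, coeff_nuDenom]
  apply Finset.sum_subset
  · exact Finset.range_subset_range.2 (by omega)
  · intro i hi hq
    simp only [Finset.mem_range] at hi hq
    exact coeff_trm_zero (by omega)

end MincAux

/-- Minc's generating function satisfies
`ν(q) = 1/(1 + Σ_{i≥1} (−1)^i q^{2^{i+1}−i−2}/((1−q)(1−q³)⋯(1−q^{2^i−1})))`. -/
theorem minc_generating_function :
    PowerSeries.mk (fun N => (nuCoeff N : ℤ)) * nuDenom = 1 := by
  open MincAux in
  have hA : PowerSeries.mk (fun N => (nuCoeff N : ℤ)) = Aser := by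
    ext n
    simp [Aser, coeff_mk, nuCoeff_eq]
  rw [hA]
  ext N
  have step1 : PowerSeries.coeff N (Aser * nuDenom)
      = PowerSeries.coeff N (Aser * ∑ i ∈ Finset.range (N + 1), trm i) := by
    rw [PowerSeries.coeff_mul, PowerSeries.coeff_mul]
    apply Finset.sum_congr rfl
    intro p hp
    rw [Finset.HasAntidiagonal.mem_antidiagonal] at hp
    rw [coeff_nuDenom_eq (show p.2 ≤ N by omega)]
  rw [step1, main N, map_add]
  have step2 : PowerSeries.coeff N
      ((-1 : PowerSeries ℤ) ^ N * (rho (N+1) * (Aser - Gser (N+1)))) = 0 := by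
    rw [coeff_negpow_mul, rho, mul_assoc, PowerSeries.coeff_X_pow_mul', if_neg, mul_zero]
    have h1 : N + 1 < 2 ^ (N+1) := Nat.lt_two_pow_self (n := N+1)
    have h2 : 2 ^ (N+1+1) = 2 * 2 ^ (N+1) := by ring
    omega
  rw [step2, add_zero]
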